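/- The word (0001)^ω contains no factor of the form x·x·g(x)·g(x), where x is a nonempty binary word and g is the antimorphic involution sending a word to the complement of its reversal (0↔1). -/

import Mathlib

/-- `L` is a factor of the periodic infinite word `(0001)^ω`. -/
def IsFactorP (L : List Bool) : Prop :=
  ∃ n, L <:+: (List.replicate n [false, false, false, true]).flatten

lemma cnt_prefix : ∀ (n m : ℕ), m ≤ 4*n →
    (((List.replicate n [false, false, false, true]).flatten).take m).count true = m / 4 := by
  intro n
  induction n with
  | zero => intro m hm; simp at hm; simp [hm]
  | succ n ih =>
    intro m hm
    rw [List.replicate_succ, List.flatten_cons, List.take_append]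
    by_cases h4 : m ≤ 4
    · interval_cases m <;> simp [ih]
    · push_neg at h4
      rw [List.take_of_length_le (by simp; omega), List.count_append]
      simp only [List.length_cons, List.length_nil]
      rw [ih (m - 4) (by omega)]
      have : m = (m - 4) + 4 := by omega
      rw [this]
      simp [Nat.add_div_right]; omega

lemma cnt_not (x : List Bool) :
    (List.map (fun b => !b) x).count true + x.count true = x.length := by
  induction x with
  | nil => simp
  | cons b l ih => cases b <;> simp [List.count_cons, ih] <;> omega

theorem stmt3 (x : List Bool) (hx : x ≠ []) :
    ¬ IsFactorP (x ++ x ++ (List.map (fun b => !b) x).reverse ++ (List.map (fun b => !b) x).reverse) := by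
  rintro ⟨n, s, t, hst⟩
  set w := x ++ x ++ (List.map (fun b => !b) x).reverse ++ (List.map (fun b => !b) x).reverse with hw
  set F := (List.replicate n [false, false, false, true]).flatten with hF
  have hlenF : F.length = 4 * n := by simp [hF, Nat.mul_comm]
  have hlenw : w.length = 4 * x.length := by simp [hw]; ring
  have hlens : s.length + w.length + t.length = 4 * n := by
    have := congrArg List.length hst
    simp [hlenF] at this; omega
  -- count of true in w is 2 * x.length
  have hcw : w.count true = 2 * x.length := by
    have := cnt_not x
    simp [hw, List.count_append, List.count_reverse]
    omega
  -- prefixes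
  have h1 : F.take s.length = s := by
    rw [← hst, List.append_assoc]; exact List.take_left (l₁ := s) (l₂ := _)
  have h2 : F.take (s.length + w.length) = s ++ w := by
    rw [← hst]
    have : s ++ w ++ t = (s ++ w) ++ t := by simp
    rw [this]
    have := List.take_left (l₁ := s ++ w) (l₂ := t)
    simpa using this
  have hc1 : s.count true = s.length / 4 := by
    have := cnt_prefix n s.length (by omega)
    rwa [← hF, h1] at this
  have hc2 : s.count true + w.count true = (s.length + w.length) / 4 := by
    have := cnt_prefix n (s.length + w.length) (by omega)
    rw [← hF, h2, List.count_append] at this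
    exact this
  rw [hc1, hcw, hlenw] at hc2
  rw [Nat.add_mul_div_left _ _ (by norm_num : 0 < 4)] at hc2
  have : x.length = 0 := by omega
  exact hx (List.length_eq_zero_iff.mp this)
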